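/- arXiv:1009.6229 — 10 statements merged into one kernel-verified Lean document; each statement's English description precedes it below -/
import Mathlib

section
/- Let μ be a grade-2 additive set function on a σ-algebra 𝒜 with μ(∅)=0, and define the interference term I(A,B) = μ(A∪B) − μ(A) − μ(B) for disjoint A,B. Then for mutually disjoint sets A₁,…,Aₙ ∈ 𝒜, μ(⋃ᵢ Aᵢ) = Σᵢ μ(Aᵢ) + Σ_{i<j} I(Aᵢ,Aⱼ). -/
open Finset

lemma fin_iUnion_split {Ω : Type*} (m : ℕ) (B : Fin (m+1) → Set Ω) :
    (⋃ i, B i) = (⋃ i : Fin m, B i.castSucc) ∪ B (Fin.last m) := by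
  ext x
  simp only [Set.mem_iUnion, Set.mem_union]
  constructor
  · rintro ⟨i, hi⟩
    rcases Fin.eq_castSucc_or_eq_last i with ⟨j, rfl⟩ | rfl
    · exact Or.inl ⟨j, hi⟩
    · exact Or.inr hi
  · rintro (⟨j, h⟩ | h)
    · exact ⟨_, h⟩
    · exact ⟨_, h⟩

lemma sum_Ioi_castSucc' {M : Type*} [AddCommMonoid M] {n : ℕ} (i : Fin n)
    (f : Fin (n+1) → M) :
    ∑ j ∈ Ioi i.castSucc, f j = (∑ j ∈ Ioi i, f j.castSucc) + f (Fin.last n) := by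
  have h : Ioi i.castSucc = insert (Fin.last n) ((Ioi i).map Fin.castSuccEmb) := by
    ext j
    simp only [mem_Ioi, mem_insert, mem_map, Fin.castSuccEmb]
    constructor
    · intro hj
      rcases Fin.eq_castSucc_or_eq_last j with ⟨k, rfl⟩ | rfl
      · exact Or.inr ⟨k, by simpa using hj, rfl⟩
      · exact Or.inl rfl
    · rintro (rfl | ⟨k, hk, rfl⟩)
      · exact Fin.castSucc_lt_last i
      · exact Fin.castSucc_lt_castSucc_iff.mpr hk
  rw [h, Finset.sum_insert, Finset.sum_map, add_comm]
  · rfl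
  · simp only [mem_map]
    rintro ⟨k, _, hkk⟩
    exact (Fin.castSucc_lt_last k).ne hkk

lemma aux_interf {Ω : Type*} [MeasurableSpace Ω] (μ : Set Ω → ℝ)
    (hempty : μ ∅ = 0)
    (hgrade2 : ∀ A B C : Set Ω, MeasurableSet A → MeasurableSet B → MeasurableSet C →
      Disjoint A B → Disjoint A C → Disjoint B C →
      μ (A ∪ B ∪ C) = μ (A ∪ B) + μ (A ∪ C) + μ (B ∪ C) - μ A - μ B - μ C) :
    ∀ (m : ℕ) (B : Fin m → Set Ω) (C : Set Ω), (∀ i, MeasurableSet (B i)) →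
      MeasurableSet C → (∀ i j, i ≠ j → Disjoint (B i) (B j)) →
      (∀ i, Disjoint (B i) C) →
      μ ((⋃ i, B i) ∪ C) = μ (⋃ i, B i) + μ C +
        ∑ i, (μ (B i ∪ C) - μ (B i) - μ C) := by
  intro m
  induction m with
  | zero =>
    intro B C _ _ _ _
    simp [Set.iUnion_of_empty, hempty]
  | succ m ih =>
    intro B C hB hC hd hdc
    set S : Set Ω := ⋃ i : Fin m, B i.castSucc with hS
    have hSm : MeasurableSet S := MeasurableSet.iUnion fun i => hB _
    have hsplit := fin_iUnion_split m B
    have hSX : Disjoint S (B (Fin.last m)) := by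
      rw [hS, Set.disjoint_iUnion_left]
      exact fun i => hd _ _ (Fin.castSucc_lt_last i).ne
    have hSC : Disjoint S C := by
      rw [hS, Set.disjoint_iUnion_left]; exact fun i => hdc _
    have key := hgrade2 S (B (Fin.last m)) C hSm (hB _) hC hSX hSC (hdc _)
    have ihS := ih (fun i => B i.castSucc) C (fun i => hB _) hC
      (fun i j hij => hd _ _ (by simpa using hij)) (fun i => hdc _)
    rw [hsplit]
    rw [key, ihS]
    rw [Fin.sum_univ_castSucc]
    ring

/-- Grade-2 additivity: for mutually disjoint measurable sets `A₁,…,Aₙ`,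
`μ(⋃ᵢ Aᵢ) = Σᵢ μ(Aᵢ) + Σ_{i<j} I(Aᵢ,Aⱼ)` where `I(A,B) = μ(A∪B) − μ(A) − μ(B)`. -/
theorem stmt_0 {Ω : Type*} [MeasurableSpace Ω] (μ : Set Ω → ℝ)
    (hnonneg : ∀ A, MeasurableSet A → 0 ≤ μ A)
    (hempty : μ ∅ = 0)
    (hgrade2 : ∀ A B C : Set Ω, MeasurableSet A → MeasurableSet B → MeasurableSet C →
      Disjoint A B → Disjoint A C → Disjoint B C →
      μ (A ∪ B ∪ C) = μ (A ∪ B) + μ (A ∪ C) + μ (B ∪ C) - μ A - μ B - μ C)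
    (n : ℕ) (A : Fin n → Set Ω) (hA : ∀ i, MeasurableSet (A i))
    (hdisj : ∀ i j, i ≠ j → Disjoint (A i) (A j)) :
    μ (⋃ i, A i) = ∑ i, μ (A i) +
      ∑ i, ∑ j ∈ Finset.Ioi i, (μ (A i ∪ A j) - μ (A i) - μ (A j)) := by
  induction n with
  | zero => simp [Set.iUnion_of_empty, hempty]
  | succ n ih =>
    have hsplit := fin_iUnion_split n A
    have hexp := aux_interf μ hempty hgrade2 n (fun i => A i.castSucc) (A (Fin.last n))
      (fun i => hA _) (hA _) (fun i j hij => hdisj _ _ (by simpa using hij))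
      (fun i => hdisj _ _ (Fin.castSucc_lt_last i).ne)
    have ihA := ih (fun i => A i.castSucc) (fun i => hA _)
      (fun i j hij => hdisj _ _ (by simpa using hij))
    rw [hsplit, hexp, ihA]
    have hIoiLast : (Ioi (Fin.last n)) = (∅ : Finset (Fin (n+1))) :=
      Finset.eq_empty_of_forall_notMem fun j hj => (Fin.le_last j).not_gt (mem_Ioi.mp hj)
    rw [Fin.sum_univ_castSucc (f := fun i => μ (A i))]
    rw [Fin.sum_univ_castSucc
      (f := fun i => ∑ j ∈ Finset.Ioi i, (μ (A i ∪ A j) - μ (A i) - μ (A j)))]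
    have hlast0 : ∑ j ∈ Finset.Ioi (Fin.last n), (μ (A (Fin.last n) ∪ A j)
        - μ (A (Fin.last n)) - μ (A j)) = 0 := by
      rw [hIoiLast]; simp
    rw [hlast0]
    have hIoi : ∀ i : Fin n, ∑ j ∈ Finset.Ioi i.castSucc,
        (μ (A i.castSucc ∪ A j) - μ (A i.castSucc) - μ (A j)) =
        (∑ j ∈ Finset.Ioi i, (μ (A i.castSucc ∪ A j.castSucc) - μ (A i.castSucc)
          - μ (A j.castSucc))) +
        (μ (A i.castSucc ∪ A (Fin.last n)) - μ (A i.castSucc) - μ (A (Fin.last n))) :=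
      fun i => sum_Ioi_castSucc' i _
    rw [Finset.sum_congr rfl fun i _ => hIoi i, Finset.sum_add_distrib]
    ring
end

section
/- Let μ be a grade-2 additive set function on 𝒜 with μ(∅)=0 and interference term I. Then for mutually disjoint A₁,…,Aₙ ∈ 𝒜 with n ≥ 1, μ(⋃_{i=1}^n Aᵢ) − μ(⋃_{i=2}^n Aᵢ) = μ(A₁) + Σ_{i=2}^n I(A₁,Aᵢ). -/
lemma aux_union {Ω : Type*} [MeasurableSpace Ω] (μ : Set Ω → ℝ)
    (hempty : μ ∅ = 0)
    (hgrade2 : ∀ A B C : Set Ω, MeasurableSet A → MeasurableSet B → MeasurableSet C →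
      Disjoint A B → Disjoint A C → Disjoint B C →
      μ (A ∪ B ∪ C) = μ (A ∪ B) + μ (A ∪ C) + μ (B ∪ C) - μ A - μ B - μ C)
    {ι : Type*} [DecidableEq ι] (A : ι → Set Ω) (B : Set Ω) (hB : MeasurableSet B)
    (s : Finset ι) :
    (∀ i ∈ s, MeasurableSet (A i)) → (∀ i ∈ s, Disjoint B (A i)) →
    (∀ i ∈ s, ∀ j ∈ s, i ≠ j → Disjoint (A i) (A j)) →
    μ (B ∪ ⋃ i ∈ s, A i) = μ (⋃ i ∈ s, A i) + μ B +
      ∑ i ∈ s, (μ (B ∪ A i) - μ B - μ (A i)) := by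
  induction s using Finset.induction_on with
  | empty => intro _ _ _; simp [hempty]
  | @insert a s ha ih =>
    intro hA hdB hd
    have hAa : MeasurableSet (A a) := hA a (by simp)
    have hAs : ∀ i ∈ s, MeasurableSet (A i) := fun i hi => hA i (by simp [hi])
    have hdBs : ∀ i ∈ s, Disjoint B (A i) := fun i hi => hdB i (by simp [hi])
    have hds : ∀ i ∈ s, ∀ j ∈ s, i ≠ j → Disjoint (A i) (A j) :=
      fun i hi j hj => hd i (by simp [hi]) j (by simp [hj])
    have hC : MeasurableSet (⋃ i ∈ s, A i) := Finset.measurableSet_biUnion s hAs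
    have hdBC : Disjoint B (⋃ i ∈ s, A i) := by
      simp only [Set.disjoint_iUnion_right]
      exact fun i hi => hdBs i hi
    have hdaC : Disjoint (A a) (⋃ i ∈ s, A i) := by
      simp only [Set.disjoint_iUnion_right]
      exact fun i hi => hd a (by simp) i (by simp [hi]) (fun h => ha (h ▸ hi))
    have key := hgrade2 B (A a) (⋃ i ∈ s, A i) hB hAa hC (hdB a (by simp)) hdBC hdaC
    have hset : (⋃ i ∈ insert a s, A i) = A a ∪ ⋃ i ∈ s, A i := by
      simp
    rw [hset, ← Set.union_assoc, key,
      ih hAs hdBs hds, Finset.sum_insert ha]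
    ring

/-- For mutually disjoint `A₁,…,Aₙ` (n ≥ 1),
`μ(⋃_{i=1}^n Aᵢ) − μ(⋃_{i=2}^n Aᵢ) = μ(A₁) + Σ_{i=2}^n I(A₁,Aᵢ)`. -/
theorem stmt_1 {Ω : Type*} [MeasurableSpace Ω] (μ : Set Ω → ℝ)
    (hnonneg : ∀ A, MeasurableSet A → 0 ≤ μ A)
    (hempty : μ ∅ = 0)
    (hgrade2 : ∀ A B C : Set Ω, MeasurableSet A → MeasurableSet B → MeasurableSet C →
      Disjoint A B → Disjoint A C → Disjoint B C →
      μ (A ∪ B ∪ C) = μ (A ∪ B) + μ (A ∪ C) + μ (B ∪ C) - μ A - μ B - μ C)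
    (n : ℕ) (A : Fin (n + 1) → Set Ω) (hA : ∀ i, MeasurableSet (A i))
    (hdisj : ∀ i j, i ≠ j → Disjoint (A i) (A j)) :
    μ (⋃ i, A i) - μ (⋃ i ∈ Finset.Ioi (0 : Fin (n + 1)), A i) =
      μ (A 0) + ∑ i ∈ Finset.Ioi (0 : Fin (n + 1)),
        (μ (A 0 ∪ A i) - μ (A 0) - μ (A i)) := by
  have key := aux_union μ hempty hgrade2 A (A 0) (hA 0) (Finset.Ioi 0)
    (fun i _ => hA i)
    (fun i hi => hdisj 0 i (by simp at hi; exact Ne.symm hi))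
    (fun i _ j _ hij => hdisj i j hij)
  have hset : (⋃ i, A i) = A 0 ∪ ⋃ i ∈ Finset.Ioi (0 : Fin (n + 1)), A i := by
    ext x
    simp only [Set.mem_iUnion, Set.mem_union, Finset.mem_Ioi, Fin.pos_iff_ne_zero,
      exists_prop]
    constructor
    · rintro ⟨i, hi⟩
      by_cases h : i = 0
      · exact Or.inl (h ▸ hi)
      · exact Or.inr ⟨i, h, hi⟩
    · rintro (h | ⟨i, _, hi⟩)
      · exact ⟨0, h⟩
      · exact ⟨i, hi⟩
  rw [hset, key]
  ring
end

section
/- Let μ be a grade-2 additive set function on 𝒜 with μ(∅)=0. Then for mutually disjoint A₁,…,Aₙ (n ≥ 2), μ(⋃ᵢ Aᵢ) = Σ_{i<j} μ(Aᵢ ∪ Aⱼ) − (n−2) Σᵢ μ(Aᵢ). -/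
private lemma aux2 {Ω : Type*} [MeasurableSpace Ω] (μ : Set Ω → ℝ)
    (hempty : μ ∅ = 0)
    (hgrade2 : ∀ A B C : Set Ω, MeasurableSet A → MeasurableSet B → MeasurableSet C →
      Disjoint A B → Disjoint A C → Disjoint B C →
      μ (A ∪ B ∪ C) = μ (A ∪ B) + μ (A ∪ C) + μ (B ∪ C) - μ A - μ B - μ C) :
    ∀ (n : ℕ) (A : ℕ → Set Ω) (B : Set Ω), (∀ i, MeasurableSet (A i)) → MeasurableSet B →
    (∀ i j, i ≠ j → Disjoint (A i) (A j)) → (∀ i, i < n → Disjoint (A i) B) →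
    μ ((⋃ i < n, A i) ∪ B) = (∑ i ∈ Finset.range n, μ (A i ∪ B)) + μ (⋃ i < n, A i)
      - (∑ i ∈ Finset.range n, μ (A i)) - ((n : ℝ) - 1) * μ B := by
  intro n
  induction n with
  | zero => intro A B _ _ _ _; simp [hempty]
  | succ n ih =>
    intro A B hA hB hd hdB
    have hU : MeasurableSet (⋃ i < n, A i) :=
      MeasurableSet.iUnion fun i => MeasurableSet.iUnion fun _ => hA i
    have hdU : ∀ (C : Set Ω), (∀ i, i < n → Disjoint (A i) C) → Disjoint (⋃ i < n, A i) C := by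
      intro C hC
      simp only [Set.disjoint_iUnion_left]
      exact fun i hi => hC i hi
    have hsucc : ⋃ i < n + 1, A i = (⋃ i < n, A i) ∪ A n := Set.biUnion_lt_succ A n
    have key := hgrade2 (⋃ i < n, A i) (A n) B hU (hA n) hB
      (hdU (A n) (fun i hi => hd i n (Nat.ne_of_lt hi)))
      (hdU B (fun i hi => hdB i (Nat.lt_succ_of_lt hi))) (hdB n (Nat.lt_succ_self n))
    have ihB := ih A B hA hB hd (fun i hi => hdB i (Nat.lt_succ_of_lt hi))
    rw [hsucc, key, ihB, Finset.sum_range_succ, Finset.sum_range_succ]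
    push_cast
    ring

private lemma aux1 {Ω : Type*} [MeasurableSpace Ω] (μ : Set Ω → ℝ)
    (hempty : μ ∅ = 0)
    (hgrade2 : ∀ A B C : Set Ω, MeasurableSet A → MeasurableSet B → MeasurableSet C →
      Disjoint A B → Disjoint A C → Disjoint B C →
      μ (A ∪ B ∪ C) = μ (A ∪ B) + μ (A ∪ C) + μ (B ∪ C) - μ A - μ B - μ C) :
    ∀ (n : ℕ) (A : ℕ → Set Ω), (∀ i, MeasurableSet (A i)) →
    (∀ i j, i ≠ j → Disjoint (A i) (A j)) →
    μ (⋃ i < n, A i) = (∑ i ∈ Finset.range n, ∑ j ∈ Finset.Ioo i n, μ (A i ∪ A j))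
      - ((n : ℝ) - 2) * ∑ i ∈ Finset.range n, μ (A i) := by
  intro n
  induction n with
  | zero => intro A _ _; simp [hempty]
  | succ n ih =>
    intro A hA hd
    have hsucc : ⋃ i < n + 1, A i = (⋃ i < n, A i) ∪ A n := Set.biUnion_lt_succ A n
    have h2 := aux2 μ hempty hgrade2 n A (A n) hA (hA n) hd
      (fun i hi => hd i n (Nat.ne_of_lt hi))
    have hIoo : ∀ i, i < n → (Finset.Ioo i (n+1)) = insert n (Finset.Ioo i n) := by
      intro i hi; ext x; simp; omega
    have hdouble : ∑ i ∈ Finset.range (n+1), ∑ j ∈ Finset.Ioo i (n+1), μ (A i ∪ A j)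
        = (∑ i ∈ Finset.range n, ∑ j ∈ Finset.Ioo i n, μ (A i ∪ A j))
          + ∑ i ∈ Finset.range n, μ (A i ∪ A n) := by
      rw [Finset.sum_range_succ]
      have h0 : Finset.Ioo n (n+1) = ∅ := by ext x; simp
      rw [h0, Finset.sum_empty, add_zero,
        Finset.sum_congr rfl (fun i hi => by
          rw [hIoo i (Finset.mem_range.mp hi), Finset.sum_insert (by simp)]),
        Finset.sum_add_distrib]
      ring
    rw [hsucc, h2, ih A hA hd, hdouble, Finset.sum_range_succ]
    push_cast
    ring

/-- For mutually disjoint `A₁,…,Aₙ` (n ≥ 2),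
`μ(⋃ᵢ Aᵢ) = Σ_{i<j} μ(Aᵢ ∪ Aⱼ) − (n−2) Σᵢ μ(Aᵢ)`. -/
theorem stmt_2 {Ω : Type*} [MeasurableSpace Ω] (μ : Set Ω → ℝ)
    (hnonneg : ∀ A, MeasurableSet A → 0 ≤ μ A)
    (hempty : μ ∅ = 0)
    (hgrade2 : ∀ A B C : Set Ω, MeasurableSet A → MeasurableSet B → MeasurableSet C →
      Disjoint A B → Disjoint A C → Disjoint B C →
      μ (A ∪ B ∪ C) = μ (A ∪ B) + μ (A ∪ C) + μ (B ∪ C) - μ A - μ B - μ C)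
    (n : ℕ) (hn : 2 ≤ n) (A : Fin n → Set Ω) (hA : ∀ i, MeasurableSet (A i))
    (hdisj : ∀ i j, i ≠ j → Disjoint (A i) (A j)) :
    μ (⋃ i, A i) = ∑ i, ∑ j ∈ Finset.Ioi i, μ (A i ∪ A j)
      - ((n : ℝ) - 2) * ∑ i, μ (A i) := by
  set A' : ℕ → Set Ω := fun i => if h : i < n then A ⟨i, h⟩ else ∅ with hA'def
  have hA'val : ∀ (i : Fin n), A' (i : ℕ) = A i := by
    intro i; simp [hA'def, i.isLt]
  have hA' : ∀ i, MeasurableSet (A' i) := by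
    intro i
    by_cases h : i < n
    · simpa [hA'def, h] using hA ⟨i, h⟩
    · simp [hA'def, h]
  have hd' : ∀ i j, i ≠ j → Disjoint (A' i) (A' j) := by
    intro i j hij
    by_cases hi : i < n
    · by_cases hj : j < n
      · simp only [hA'def, dif_pos hi, dif_pos hj]
        exact hdisj ⟨i, hi⟩ ⟨j, hj⟩ (by simp [Fin.ext_iff, hij])
      · simp [hA'def, hj]
    · simp [hA'def, hi]
  have hUnion : ⋃ i, A i = ⋃ i < n, A' i := by
    ext x
    simp only [Set.mem_iUnion]
    constructor
    · rintro ⟨i, hx⟩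
      exact ⟨(i : ℕ), i.isLt, by rwa [hA'val]⟩
    · rintro ⟨i, hi, hx⟩
      exact ⟨⟨i, hi⟩, by rwa [hA'val ⟨i, hi⟩] at hx⟩
  have hsum1 : ∑ i, μ (A i) = ∑ i ∈ Finset.range n, μ (A' i) := by
    rw [← Fin.sum_univ_eq_sum_range]
    exact Finset.sum_congr rfl fun i _ => by rw [hA'val]
  have hsum2 : ∑ i, ∑ j ∈ Finset.Ioi i, μ (A i ∪ A j)
      = ∑ i ∈ Finset.range n, ∑ j ∈ Finset.Ioo i n, μ (A' i ∪ A' j) := by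
    rw [← Fin.sum_univ_eq_sum_range]
    refine Finset.sum_congr rfl fun i _ => ?_
    have hmap : Finset.Ioo (i : ℕ) n = (Finset.Ioi i).map Fin.valEmbedding := by
      rw [Fin.map_valEmbedding_Ioi]
    rw [hmap, Finset.sum_map]
    exact Finset.sum_congr rfl fun j _ => by simp only [Fin.valEmbedding_apply, hA'val]
  rw [hUnion, hsum1, hsum2]
  exact aux1 μ hempty hgrade2 n A' hA' hd'
end

section
/- Let D: 𝒜 × 𝒜 → ℂ be a decoherence functional and μ(A) = D(A,A). If A ∩ B = ∅ and μ(A ∪ B) = 0, then μ(A) = μ(B). -/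
/-- For a decoherence functional `D` with `μ(A) = D(A,A)`: if `A ∩ B = ∅` and
`μ(A ∪ B) = 0`, then `μ(A) = μ(B)`. -/
theorem stmt_4 {Ω : Type*} (D : Set Ω → Set Ω → ℂ)
    (hherm : ∀ A B, D A B = starRingEnd ℂ (D B A))
    (hadd : ∀ A B C : Set Ω, Disjoint A B → D (A ∪ B) C = D A C + D B C)
    (hpos : ∀ A : Set Ω, 0 ≤ (D A A).re ∧ (D A A).im = 0)
    (hcs : ∀ A B : Set Ω, ‖D A B‖ ^ 2 ≤ (D A A).re * (D B B).re)
    (A B : Set Ω) (hAB : Disjoint A B) (h : (D (A ∪ B) (A ∪ B)).re = 0) :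
    (D A A).re = (D B B).re := by
  have expand : D (A ∪ B) (A ∪ B) = D A (A ∪ B) + D B (A ∪ B) := hadd A B _ hAB
  have hA : D A (A ∪ B) = starRingEnd ℂ (D A A + D B A) := by
    rw [hherm A (A ∪ B), hadd A B A hAB]
  have hB : D B (A ∪ B) = starRingEnd ℂ (D A B + D B B) := by
    rw [hherm B (A ∪ B), hadd A B B hAB]
  have hBA : (D B A).re = (D A B).re := by
    rw [hherm B A]; simp
  have hre : (D A A).re + (D A B).re + ((D A B).re + (D B B).re) = 0 := by
    rw [expand, hA, hB] at h
    simp [Complex.add_re] at h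
    linarith [h, hBA]
  have hr2 : (D A B).re ^ 2 ≤ ‖D A B‖ ^ 2 := by
    rw [Complex.sq_norm, Complex.normSq_apply]
    nlinarith [sq_nonneg (D A B).im]
  have hcs' := hr2.trans (hcs A B)
  have hr : (D A B).re = -(((D A A).re + (D B B).re) / 2) := by linarith
  rw [hr] at hcs'
  nlinarith [sq_nonneg ((D A A).re - (D B B).re), hcs']
end

section
/- Let D be a decoherence functional on an algebra 𝒜 with μ(A) = D(A,A). Then for disjoint A, B: (√μ(A) − √μ(B))² ≤ μ(A ∪ B) ≤ (√μ(A) + √μ(B))². -/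
/-- For a decoherence functional `D` with `μ(A) = D(A,A)` and disjoint `A,B`:
`(√μ(A) − √μ(B))² ≤ μ(A ∪ B) ≤ (√μ(A) + √μ(B))²`. -/
theorem stmt_5 {Ω : Type*} (D : Set Ω → Set Ω → ℂ)
    (hherm : ∀ A B, D A B = starRingEnd ℂ (D B A))
    (hadd : ∀ A B C : Set Ω, Disjoint A B → D (A ∪ B) C = D A C + D B C)
    (hpos : ∀ A : Set Ω, 0 ≤ (D A A).re ∧ (D A A).im = 0)
    (hcs : ∀ A B : Set Ω, ‖D A B‖ ^ 2 ≤ (D A A).re * (D B B).re)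
    (A B : Set Ω) (hAB : Disjoint A B) :
    (Real.sqrt ((D A A).re) - Real.sqrt ((D B B).re)) ^ 2 ≤ (D (A ∪ B) (A ∪ B)).re ∧
      (D (A ∪ B) (A ∪ B)).re ≤ (Real.sqrt ((D A A).re) + Real.sqrt ((D B B).re)) ^ 2 := by
  have ha := (hpos A).1
  have hb := (hpos B).1
  have hexp : (D (A ∪ B) (A ∪ B)).re
      = (D A A).re + (D B B).re + 2 * (D A B).re := by
    have h1 : D (A ∪ B) (A ∪ B) = D A (A ∪ B) + D B (A ∪ B) := hadd A B _ hAB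
    have h2 : D A (A ∪ B) = D A A + D A B := by
      rw [hherm, hadd A B A hAB, map_add, ← hherm, ← hherm]
    have h3 : D B (A ∪ B) = D B A + D B B := by
      rw [hherm, hadd A B B hAB, map_add, ← hherm, ← hherm]
    have h4 : (D B A).re = (D A B).re := by rw [hherm B A]; simp
    rw [h1, h2, h3]; simp [Complex.add_re, h4]; ring
  have habs : |(D A B).re| ≤ Real.sqrt ((D A A).re) * Real.sqrt ((D B B).re) := by
    have h1 : |(D A B).re| ≤ ‖D A B‖ := Complex.abs_re_le_norm _
    have h2 : ‖D A B‖ ≤ Real.sqrt ((D A A).re * (D B B).re) := by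
      rw [← Real.sqrt_sq (norm_nonneg _)]
      exact Real.sqrt_le_sqrt (hcs A B)
    rw [Real.sqrt_mul ha] at h2
    linarith
  have hsa := Real.sq_sqrt ha
  have hsb := Real.sq_sqrt hb
  constructor <;> rw [hexp] <;> nlinarith [abs_le.mp habs]
end

section
/- In the quantum computer model, μ is additive in the last coordinate: if B₁,…,B_k ⊆ 𝒪ₙ are mutually disjoint, then μ(A₁×⋯×Aₙ₋₁×(⋃ᵢBᵢ)) = Σᵢ μ(A₁×⋯×Aₙ₋₁×Bᵢ). -/
/-- The q-measure is additive in the last coordinate: for mutually disjoint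
`B₁,…,B_k ⊆ 𝒪ₙ`, `μ(A₁×⋯×Aₙ₋₁×(⋃ⱼBⱼ)) = Σⱼ μ(A₁×⋯×Aₙ₋₁×Bⱼ)`. -/
theorem stmt_12 {H : Type*} [NormedAddCommGroup H] [InnerProductSpace ℂ H]
    [FiniteDimensional ℂ H]
    (n : ℕ) (O : Fin (n + 1) → Type*) [∀ i, Fintype (O i)] [∀ i, DecidableEq (O i)]
    (U : Fin (n + 1) → H ≃ₗᵢ[ℂ] H) (P : (i : Fin (n + 1)) → O i → (H →ₗ[ℂ] H))
    (hidem : ∀ i a, (P i a) ∘ₗ (P i a) = P i a)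
    (hsymm : ∀ i a, LinearMap.IsSymmetric (P i a))
    (horth : ∀ i a b, a ≠ b → (P i a) ∘ₗ (P i b) = 0)
    (hsum : ∀ i, ∑ a, P i a = LinearMap.id)
    (ψ : H) (hψ : ‖ψ‖ = 1)
    (v : (∀ i, O i) → H)
    (hv : ∀ ω, v ω = (List.finRange (n + 1)).foldl (fun x i => P i (ω i) (U i x)) ψ)
    (A : (i : Fin (n + 1)) → Finset (O i))
    (k : ℕ) (B : Fin k → Finset (O (Fin.last n)))
    (hB : ∀ i j, i ≠ j → Disjoint (B i) (B j)) :
    ∑ ω ∈ Fintype.piFinset (Function.update A (Fin.last n) (Finset.univ.biUnion B)),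
      ∑ ω' ∈ Fintype.piFinset (Function.update A (Fin.last n) (Finset.univ.biUnion B)),
        (inner ℂ (v ω') (v ω) : ℂ) =
      ∑ j : Fin k,
        ∑ ω ∈ Fintype.piFinset (Function.update A (Fin.last n) (B j)),
          ∑ ω' ∈ Fintype.piFinset (Function.update A (Fin.last n) (B j)),
            (inner ℂ (v ω') (v ω) : ℂ) := by
  -- v ω is in the range of the last projection
  have hv' : ∀ ω, v ω = P (Fin.last n) (ω (Fin.last n))
      (U (Fin.last n) ((List.finRange n).foldl
        (fun x i => P i.castSucc (ω i.castSucc) (U i.castSucc x)) ψ)) := by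
    intro ω
    rw [hv, List.finRange_succ_last, List.foldl_append, List.foldl_map]
    simp
  -- cross terms vanish
  have hzero : ∀ ω ω' : ∀ i, O i, ω (Fin.last n) ≠ ω' (Fin.last n) →
      (inner ℂ (v ω') (v ω) : ℂ) = 0 := by
    intro ω ω' hne
    rw [hv' ω, hv' ω']
    set a := ω (Fin.last n)
    set b := ω' (Fin.last n)
    set x := U (Fin.last n) ((List.finRange n).foldl
        (fun x i => P i.castSucc (ω i.castSucc) (U i.castSucc x)) ψ)
    set y := U (Fin.last n) ((List.finRange n).foldl
        (fun x i => P i.castSucc (ω' i.castSucc) (U i.castSucc x)) ψ)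
    have := hsymm (Fin.last n) b y (P (Fin.last n) a x)
    rw [this]
    have h0 : (P (Fin.last n) b) ((P (Fin.last n) a) x) = 0 := by
      simpa using LinearMap.congr_fun (horth (Fin.last n) b a (Ne.symm hne)) x
    rw [h0, inner_zero_right]
  classical
  set S : Fin k → Finset (∀ i, O i) :=
    fun j => Fintype.piFinset (Function.update A (Fin.last n) (B j)) with hS
  have hmemS : ∀ j (ω : ∀ i, O i), ω ∈ S j → ω (Fin.last n) ∈ B j := by
    intro j ω hω
    have := (Fintype.mem_piFinset.mp hω) (Fin.last n)
    simpa using this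
  have hdisj : ∀ j j' : Fin k, j ≠ j' → Disjoint (S j) (S j') := by
    intro j j' hne
    rw [Finset.disjoint_left]
    intro ω h1 h2
    exact (Finset.disjoint_left.mp (hB j j' hne)) (hmemS j ω h1) (hmemS j' ω h2)
  have hunion : Fintype.piFinset (Function.update A (Fin.last n) (Finset.univ.biUnion B))
      = Finset.univ.biUnion S := by
    ext ω
    simp only [Fintype.mem_piFinset, Finset.mem_biUnion, Finset.mem_univ, true_and, hS]
    constructor
    · intro h
      have hlast := h (Fin.last n)
      simp only [Function.update_self, Finset.mem_biUnion, Finset.mem_univ, true_and] at hlast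
      obtain ⟨j, hj⟩ := hlast
      refine ⟨j, fun i => ?_⟩
      by_cases hi : i = Fin.last n
      · subst hi; simpa using hj
      · have := h i
        rwa [Function.update_of_ne hi] at this ⊢
    · rintro ⟨j, hj⟩ i
      by_cases hi : i = Fin.last n
      · subst hi
        have := hj (Fin.last n)
        simp only [Function.update_self] at this ⊢
        exact Finset.mem_biUnion.mpr ⟨j, Finset.mem_univ j, this⟩
      · have := hj i
        rwa [Function.update_of_ne hi] at this ⊢
  rw [hunion]
  rw [Finset.sum_biUnion (fun j _ j' _ h => hdisj j j' h)]
  refine Finset.sum_congr rfl fun j _ => ?_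
  refine Finset.sum_congr rfl fun ω hω => ?_
  rw [Finset.sum_biUnion (fun j _ j' _ h => hdisj j j' h)]
  rw [Finset.sum_eq_single j]
  · intro j' _ hne
    refine Finset.sum_eq_zero fun ω' hω' => ?_
    apply hzero
    intro heq
    exact (Finset.disjoint_left.mp (hB j j' (Ne.symm hne)))
      (hmemS j ω hω) (heq ▸ hmemS j' ω' hω')
  · intro h
    exact absurd (Finset.mem_univ j) h
end

section
/- Let Ω be a finite set, D: Ω × Ω → ℂ hermitian with the extension D(A,B) = Σ_{ω∈A,ω'∈B} D(ω,ω') satisfying D(A,A) ≥ 0, and μ(A) := D(A,A). Then for any f: Ω → ℝ≥0, the quantum integral ∫f dμ := ∫₀^∞ μ({ω : f(ω) > λ}) dλ equals Σ_{ω∈Ω} f(ω)μ({ω}) + Σ_{{ω,ω'}: ω≠ω'} 2·Re D(ω,ω') · min(f(ω), f(ω')). -/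
open MeasureTheory Classical

lemma stmt_13_aux {Ω : Type*} [Fintype Ω] [LinearOrder Ω] (F : Ω → Ω → ℝ)
    (hsymm : ∀ a b, F a b = F b a) :
    ∑ a : Ω, ∑ b : Ω, F a b =
      ∑ a : Ω, F a a + ∑ a : Ω, ∑ b ∈ Finset.univ.filter (fun b => a < b), 2 * F a b := by
  have h1 : ∀ a : Ω, ∑ b : Ω, F a b =
      F a a + ∑ b ∈ Finset.univ.filter (fun b => a < b), F a b
        + ∑ b ∈ Finset.univ.filter (fun b => b < a), F a b := by
    intro a
    have := Finset.sum_filter_add_sum_filter_not Finset.univ (fun b => a < b) (F a)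
    have hle : Finset.univ.filter (fun b => ¬ a < b) = Finset.univ.filter (fun b => b ≤ a) := by
      apply Finset.filter_congr; intro b _; simp [not_lt]
    have hins : Finset.univ.filter (fun b => b ≤ a) =
        insert a (Finset.univ.filter (fun b => b < a)) := by
      ext b; simp [le_iff_lt_or_eq, or_comm]
    rw [← this, hle, hins, Finset.sum_insert (by simp)]
    ring
  rw [Finset.sum_congr rfl (fun a _ => h1 a), Finset.sum_add_distrib, Finset.sum_add_distrib]
  have h2 : ∑ a : Ω, ∑ b ∈ Finset.univ.filter (fun b => b < a), F a b =
      ∑ a : Ω, ∑ b ∈ Finset.univ.filter (fun b => a < b), F a b := by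
    simp only [Finset.sum_filter]
    rw [Finset.sum_comm]
    exact Finset.sum_congr rfl fun a _ => Finset.sum_congr rfl fun b _ => by
      simp [hsymm a b]
  rw [h2]
  have : ∀ a : Ω, ∑ b ∈ Finset.univ.filter (fun b => a < b), 2 * F a b =
      ∑ b ∈ Finset.univ.filter (fun b => a < b), F a b
        + ∑ b ∈ Finset.univ.filter (fun b => a < b), F a b := by
    intro a; rw [← Finset.sum_add_distrib]; exact Finset.sum_congr rfl fun b _ => by ring
  rw [Finset.sum_congr rfl fun a _ => this a, Finset.sum_add_distrib]
  ring

/-- On a finite sample space the quantum integral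
`∫f dμ = ∫₀^∞ μ{ω : f(ω) > t} dt` equals
`Σ_ω f(ω)μ({ω}) + Σ_{{ω,ω'} : ω≠ω'} 2 Re D(ω,ω') min(f(ω), f(ω'))`. -/
theorem stmt_13 {Ω : Type*} [Fintype Ω] [LinearOrder Ω] (D : Ω → Ω → ℂ)
    (hherm : ∀ ω ω', D ω ω' = starRingEnd ℂ (D ω' ω))
    (hpos : ∀ A : Finset Ω, 0 ≤ (∑ ω ∈ A, ∑ ω' ∈ A, D ω ω').re)
    (f : Ω → ℝ) (hf : ∀ ω, 0 ≤ f ω) :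
    (∫ t in Set.Ioi (0 : ℝ),
        (∑ ω ∈ Finset.univ.filter (fun ω => t < f ω),
          ∑ ω' ∈ Finset.univ.filter (fun ω' => t < f ω'), D ω ω').re) =
      ∑ ω : Ω, f ω * (D ω ω).re +
        ∑ ω : Ω, ∑ ω' ∈ Finset.univ.filter (fun ω' => ω < ω'),
          2 * (D ω ω').re * min (f ω) (f ω') := by
  -- Step 1: rewrite the integrand as a double sum of interval indicators
  have hcong : ∀ t ∈ Set.Ioi (0 : ℝ),
      (∑ ω ∈ Finset.univ.filter (fun ω => t < f ω),
        ∑ ω' ∈ Finset.univ.filter (fun ω' => t < f ω'), D ω ω').re =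
      ∑ ω : Ω, ∑ ω' : Ω,
        (Set.Ioo (0:ℝ) (min (f ω) (f ω'))).indicator (fun _ => (D ω ω').re) t := by
    intro t ht
    simp only [Complex.re_sum]
    simp only [Finset.sum_filter]
    refine Finset.sum_congr rfl fun ω _ => ?_
    by_cases h1 : t < f ω
    · rw [if_pos h1]
      refine Finset.sum_congr rfl fun ω' _ => ?_
      by_cases h2 : t < f ω'
      · rw [if_pos h2,
          Set.indicator_of_mem (Set.mem_Ioo.mpr ⟨Set.mem_Ioi.mp ht, lt_min h1 h2⟩)]
      · rw [if_neg h2, Set.indicator_of_notMem]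
        intro hmem
        exact h2 ((lt_min_iff.mp (Set.mem_Ioo.mp hmem).2).2)
    · rw [if_neg h1]
      symm
      refine Finset.sum_eq_zero fun ω' _ => Set.indicator_of_notMem (fun hmem => ?_) _
      exact h1 ((lt_min_iff.mp (Set.mem_Ioo.mp hmem).2).1)
  rw [setIntegral_congr_fun measurableSet_Ioi hcong]
  -- Step 2: integrate termwise
  have hint : ∀ (ω ω' : Ω), Integrable
      ((Set.Ioo (0:ℝ) (min (f ω) (f ω'))).indicator (fun _ => (D ω ω').re))
      (volume.restrict (Set.Ioi (0:ℝ))) := by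
    intro ω ω'
    rw [integrable_indicator_iff measurableSet_Ioo]
    refine integrableOn_const (ne_of_lt ?_)
    calc (volume.restrict (Set.Ioi (0:ℝ))) (Set.Ioo 0 (min (f ω) (f ω')))
        ≤ volume (Set.Ioo 0 (min (f ω) (f ω'))) := Measure.restrict_le_self _
      _ < ⊤ := measure_Ioo_lt_top
  have hval : ∀ (ω ω' : Ω),
      (∫ t in Set.Ioi (0:ℝ),
        (Set.Ioo (0:ℝ) (min (f ω) (f ω'))).indicator (fun _ => (D ω ω').re) t) =
      (D ω ω').re * min (f ω) (f ω') := by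
    intro ω ω'
    rw [MeasureTheory.integral_indicator measurableSet_Ioo,
      Measure.restrict_restrict measurableSet_Ioo]
    have : Set.Ioo (0:ℝ) (min (f ω) (f ω')) ∩ Set.Ioi 0 =
        Set.Ioo (0:ℝ) (min (f ω) (f ω')) := by
      apply Set.inter_eq_self_of_subset_left
      exact Set.Ioo_subset_Ioi_self
    rw [this, setIntegral_const, Measure.real, Real.volume_Ioo, smul_eq_mul,
      ENNReal.toReal_ofReal (by simp [le_min_iff, hf ω, hf ω'] : (0:ℝ) ≤ min (f ω) (f ω') - 0)]
    ring
  rw [integral_finset_sum _ (fun ω _ => integrable_finset_sum _ (fun ω' _ => hint ω ω'))]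
  simp_rw [integral_finset_sum _ (fun ω' (_ : ω' ∈ Finset.univ) => hint _ ω'), hval]
  -- Step 3: algebraic rearrangement
  have hsymm : ∀ a b : Ω, (D a b).re * min (f a) (f b) = (D b a).re * min (f b) (f a) := by
    intro a b
    rw [hherm a b, Complex.conj_re, min_comm]
  rw [stmt_13_aux (fun a b => (D a b).re * min (f a) (f b)) hsymm]
  congr 1
  · exact Finset.sum_congr rfl fun a _ => by rw [min_self]; ring
  · exact Finset.sum_congr rfl fun a _ => Finset.sum_congr rfl fun b _ => by ring
end

section
/- Let (Ω, 𝒜, μ) be a q-measure space. For disjoint A, B ∈ 𝒜 and reals 0 ≤ α ≤ β, the quantum integral of the simple function αχ_A + βχ_B equals α·μ(A∪B) + (β−α)·μ(B), equivalently α·μ(A) + β·μ(B) + α·I(A,B) where I(A,B) = μ(A∪B) − μ(A) − μ(B). -/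
open MeasureTheory

/-- The quantum integral of the simple function `αχ_A + βχ_B` (disjoint `A,B`,
`0 ≤ α ≤ β`) equals `α·μ(A∪B) + (β−α)·μ(B)`, equivalently
`α·μ(A) + β·μ(B) + α·I(A,B)`. -/
theorem stmt_15 {Ω : Type*} [MeasurableSpace Ω] (μ : Set Ω → ℝ)
    (hnonneg : ∀ A, MeasurableSet A → 0 ≤ μ A)
    (hempty : μ ∅ = 0)
    (A B : Set Ω) (hA : MeasurableSet A) (hB : MeasurableSet B) (hAB : Disjoint A B)
    (α β : ℝ) (hα : 0 ≤ α) (hαβ : α ≤ β) :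
    (∫ t in Set.Ioi (0 : ℝ),
        μ {ω | α * A.indicator (fun _ => (1 : ℝ)) ω
          + β * B.indicator (fun _ => (1 : ℝ)) ω > t}) = α * μ (A ∪ B) + (β - α) * μ B ∧
      (∫ t in Set.Ioi (0 : ℝ),
        μ {ω | α * A.indicator (fun _ => (1 : ℝ)) ω
          + β * B.indicator (fun _ => (1 : ℝ)) ω > t}) =
        α * μ A + β * μ B + α * (μ (A ∪ B) - μ A - μ B) := by
  have key : (∫ t in Set.Ioi (0 : ℝ),
      μ {ω | α * A.indicator (fun _ => (1 : ℝ)) ω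
        + β * B.indicator (fun _ => (1 : ℝ)) ω > t})
      = α * μ (A ∪ B) + (β - α) * μ B := by
    have heq : Set.EqOn
        (fun t => μ {ω | α * A.indicator (fun _ => (1 : ℝ)) ω
          + β * B.indicator (fun _ => (1 : ℝ)) ω > t})
        (fun t => (Set.Ioo (0:ℝ) α).indicator (fun _ => μ (A ∪ B)) t
          + (Set.Ico α β).indicator (fun _ => μ B) t) (Set.Ioi 0) := by
      intro t ht
      simp only [Set.mem_Ioi] at ht
      rcases lt_or_ge t α with h1 | h1
      · have hset : {ω | α * A.indicator (fun _ => (1 : ℝ)) ω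
            + β * B.indicator (fun _ => (1 : ℝ)) ω > t} = A ∪ B := by
          ext ω
          by_cases hωA : ω ∈ A <;> by_cases hωB : ω ∈ B <;>
            simp [Set.indicator_of_mem, Set.indicator_of_notMem, hωA, hωB] <;>
            first
            | exact absurd (hAB.ne_of_mem hωA hωB) (fun h => h rfl)
            | linarith
        simp only [hset]
        rw [Set.indicator_of_mem (by exact ⟨ht, h1⟩),
          Set.indicator_of_notMem (by simp [Set.mem_Ico]; intro h; linarith)]
        ring
      · rcases lt_or_ge t β with h2 | h2
        · have hset : {ω | α * A.indicator (fun _ => (1 : ℝ)) ω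
              + β * B.indicator (fun _ => (1 : ℝ)) ω > t} = B := by
            ext ω
            by_cases hωA : ω ∈ A <;> by_cases hωB : ω ∈ B <;>
              simp [Set.indicator_of_mem, Set.indicator_of_notMem, hωA, hωB] <;>
              first
              | exact absurd (hAB.ne_of_mem hωA hωB) (fun h => h rfl)
              | linarith
          simp only [hset]
          rw [Set.indicator_of_notMem (by simp [Set.mem_Ioo]; intro h; linarith),
            Set.indicator_of_mem (Set.mem_Ico.2 ⟨h1, h2⟩)]
          ring
        · have hset : {ω | α * A.indicator (fun _ => (1 : ℝ)) ω
              + β * B.indicator (fun _ => (1 : ℝ)) ω > t} = (∅ : Set Ω) := by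
            ext ω
            by_cases hωA : ω ∈ A <;> by_cases hωB : ω ∈ B <;>
              simp [Set.indicator_of_mem, Set.indicator_of_notMem, hωA, hωB] <;>
              first
              | exact absurd (hAB.ne_of_mem hωA hωB) (fun h => h rfl)
              | linarith
          simp only [hset, hempty]
          rw [Set.indicator_of_notMem (by simp [Set.mem_Ioo]; intro h; linarith),
            Set.indicator_of_notMem (by simp [Set.mem_Ico]; intro h; linarith)]
          ring
    rw [setIntegral_congr_fun measurableSet_Ioi heq]
    have hint1 : Integrable ((Set.Ioo (0:ℝ) α).indicator (fun _ => μ (A ∪ B))) := by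
      rw [integrable_indicator_iff measurableSet_Ioo]
      exact integrableOn_const (by simp [Real.volume_Ioo])
    have hint2 : Integrable ((Set.Ico α β).indicator (fun _ => μ B)) := by
      rw [integrable_indicator_iff measurableSet_Ico]
      exact integrableOn_const (by simp [Real.volume_Ico])
    rw [integral_add (hint1.integrableOn) (hint2.integrableOn)]
    have e1 : (∫ t in Set.Ioi (0:ℝ), (Set.Ioo (0:ℝ) α).indicator (fun _ => μ (A ∪ B)) t)
        = α * μ (A ∪ B) := by
      rw [setIntegral_indicator measurableSet_Ioo,
        Set.inter_eq_right.2 Set.Ioo_subset_Ioi_self, setIntegral_const,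
        measureReal_def, Real.volume_Ioo]
      simp [ENNReal.toReal_ofReal hα]
    have e2 : (∫ t in Set.Ioi (0:ℝ), (Set.Ico α β).indicator (fun _ => μ B) t)
        = (β - α) * μ B := by
      rw [setIntegral_indicator measurableSet_Ico, setIntegral_const]
      have hvol : volume (Set.Ioi 0 ∩ Set.Ico α β) = ENNReal.ofReal (β - α) := by
        apply le_antisymm
        · calc volume (Set.Ioi 0 ∩ Set.Ico α β) ≤ volume (Set.Ico α β) :=
              measure_mono Set.inter_subset_right
            _ = ENNReal.ofReal (β - α) := Real.volume_Ico
        · calc ENNReal.ofReal (β - α) = volume (Set.Ioo α β) := Real.volume_Ioo.symm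
            _ ≤ volume (Set.Ioi 0 ∩ Set.Ico α β) := measure_mono (fun x hx =>
              ⟨lt_of_le_of_lt hα hx.1, ⟨le_of_lt hx.1, hx.2⟩⟩)
      rw [measureReal_def, hvol]
      simp [ENNReal.toReal_ofReal (by linarith : (0:ℝ) ≤ β - α)]
    rw [e1, e2]
  exact ⟨key, by rw [key]; ring⟩
end

section
/- Let (Ω, 𝒜, μ) be a q-measure space with μ(∅) = 0, let A₁,…,Aₙ ∈ 𝒜 be mutually disjoint, and let 0 ≤ α₁ ≤ α₂ ≤ ⋯ ≤ αₙ. Then the quantum integral of the simple function Σᵢ αᵢ χ_{Aᵢ} equals α₁[μ(⋃_{i=1}^n Aᵢ) − μ(⋃_{i=2}^n Aᵢ)] + α₂[μ(⋃_{i=2}^n Aᵢ) − μ(⋃_{i=3}^n Aᵢ)] + ⋯ + α_{n−1}[μ(A_{n−1} ∪ Aₙ) − μ(Aₙ)] + αₙ μ(Aₙ). -/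
open MeasureTheory

lemma qsum_of_mem {Ω : Type*} {n : ℕ} {A : Fin n → Set Ω}
    (hdisj : ∀ i j, i ≠ j → Disjoint (A i) (A j)) (α : Fin n → ℝ)
    {ω : Ω} {k : Fin n} (hk : ω ∈ A k) :
    ∑ i, α i * (A i).indicator (fun _ => (1:ℝ)) ω = α k := by
  rw [Finset.sum_eq_single k]
  · simp [Set.indicator_of_mem hk]
  · intro i _ hik
    have : ω ∉ A i := fun h => (hdisj i k hik).le_bot ⟨h, hk⟩
    simp [Set.indicator_of_notMem this]
  · simp

lemma qsum_of_not_mem {Ω : Type*} {n : ℕ} {A : Fin n → Set Ω}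
    (α : Fin n → ℝ) {ω : Ω} (h : ∀ i, ω ∉ A i) :
    ∑ i, α i * (A i).indicator (fun _ => (1:ℝ)) ω = 0 := by
  apply Finset.sum_eq_zero
  intro i _
  simp [Set.indicator_of_notMem (h i)]

lemma qaux {Ω : Type*} (μ : Set Ω → ℝ) (hempty : μ ∅ = 0) :
    ∀ (n : ℕ) (A : Fin n → Set Ω)
      (hdisj : ∀ i j, i ≠ j → Disjoint (A i) (A j))
      (α : Fin n → ℝ) (h0 : ∀ i, 0 ≤ α i) (hmono : Monotone α),
      IntegrableOn
          (fun t => μ {ω | ∑ i, α i * (A i).indicator (fun _ => (1:ℝ)) ω > t})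
          (Set.Ioi (0:ℝ)) ∧
      (∫ t in Set.Ioi (0:ℝ),
          μ {ω | ∑ i, α i * (A i).indicator (fun _ => (1:ℝ)) ω > t}) =
        ∑ i, α i * (μ (⋃ j ∈ Finset.Ici i, A j) - μ (⋃ j ∈ Finset.Ioi i, A j)) := by
  intro n
  induction n with
  | zero =>
    intro A hdisj α h0 hmono
    have hE : Set.EqOn
        (fun t => μ {ω | ∑ i, α i * (A i).indicator (fun _ => (1:ℝ)) ω > t})
        (fun _ => (0:ℝ)) (Set.Ioi 0) := by
      intro t ht
      have hS : {ω : Ω | ∑ i, α i * (A i).indicator (fun _ => (1:ℝ)) ω > t} = ∅ := by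
        ext ω
        simp only [Set.mem_setOf_eq, Set.mem_empty_iff_false, iff_false, not_lt]
        rw [Finset.sum_of_isEmpty]
        exact le_of_lt ht
      show μ {ω : Ω | ∑ i, α i * (A i).indicator (fun _ => (1:ℝ)) ω > t} = 0
      rw [hS, hempty]
    constructor
    · exact (integrableOn_zero).congr_fun hE.symm measurableSet_Ioi
    · rw [setIntegral_congr_fun measurableSet_Ioi hE]
      simp
  | succ n ih =>
    intro A hdisj α h0 hmono
    have hdisj' : ∀ i j : Fin n, i ≠ j → Disjoint (A i.succ) (A j.succ) :=
      fun i j hij => hdisj i.succ j.succ (fun h => hij (Fin.succ_injective n h))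
    obtain ⟨ihInt, ihEq⟩ := ih (fun i => A i.succ) hdisj' (fun i => α i.succ)
      (fun i => h0 i.succ) (fun i j hij => hmono (Fin.succ_le_succ_iff.mpr hij))
    set c0 : ℝ := μ (⋃ j ∈ Finset.Ici (0 : Fin (n+1)), A j) with hc0
    set c1 : ℝ := μ (⋃ j ∈ Finset.Ioi (0 : Fin (n+1)), A j) with hc1
    -- set identities
    have hU0 : (⋃ j ∈ Finset.Ici (0 : Fin (n+1)), A j) = ⋃ i, A i := by
      ext ω; simp [Fin.zero_le]
    have hU1 : (⋃ j ∈ Finset.Ioi (0 : Fin (n+1)), A j) = ⋃ i : Fin n, A i.succ := by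
      ext ω
      simp only [Set.mem_iUnion, Finset.mem_Ioi]
      constructor
      · rintro ⟨j, hj, hω⟩
        rcases Fin.eq_succ_of_ne_zero (Fin.pos_iff_ne_zero.mp hj) with ⟨k, rfl⟩
        exact ⟨k, hω⟩
      · rintro ⟨k, hω⟩
        exact ⟨k.succ, Fin.succ_pos k, hω⟩
    -- pointwise description
    have key : Set.EqOn
        (fun t => μ {ω | ∑ i, α i * (A i).indicator (fun _ => (1:ℝ)) ω > t})
        (fun t => (Set.Ioo (0:ℝ) (α 0)).indicator (fun _ => c0 - c1) t
          + μ {ω | ∑ i : Fin n,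
              α i.succ * (A i.succ).indicator (fun _ => (1:ℝ)) ω > t}) (Set.Ioi 0) := by
      intro t ht
      simp only [Set.mem_Ioi] at ht
      show μ {ω | ∑ i, α i * (A i).indicator (fun _ => (1:ℝ)) ω > t}
          = (Set.Ioo (0:ℝ) (α 0)).indicator (fun _ => c0 - c1) t
            + μ {ω | ∑ i : Fin n, α i.succ * (A i.succ).indicator (fun _ => (1:ℝ)) ω > t}
      by_cases hlt : t < α 0
      · have h1 : {ω | ∑ i, α i * (A i).indicator (fun _ => (1:ℝ)) ω > t} = ⋃ i, A i := by
          ext ω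
          simp only [Set.mem_setOf_eq, Set.mem_iUnion]
          constructor
          · intro hft
            by_contra hno
            push_neg at hno
            rw [qsum_of_not_mem α hno] at hft
            exact absurd hft (not_lt.mpr ht.le)
          · rintro ⟨i, hi⟩
            rw [qsum_of_mem hdisj α hi]
            exact lt_of_lt_of_le hlt (hmono (Fin.zero_le i))
        have h2 : {ω | ∑ i : Fin n, α i.succ * (A i.succ).indicator (fun _ => (1:ℝ)) ω > t}
            = ⋃ i : Fin n, A i.succ := by
          ext ω
          simp only [Set.mem_setOf_eq, Set.mem_iUnion]
          constructor
          · intro hft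
            by_contra hno
            push_neg at hno
            rw [qsum_of_not_mem (fun i : Fin n => α i.succ) hno] at hft
            exact absurd hft (not_lt.mpr ht.le)
          · rintro ⟨i, hi⟩
            rw [qsum_of_mem hdisj' (fun i : Fin n => α i.succ) hi]
            exact lt_of_lt_of_le hlt (hmono (Fin.zero_le i.succ))
        rw [h1, h2, Set.indicator_of_mem (Set.mem_Ioo.mpr ⟨ht, hlt⟩),
          hc0, hc1, hU0, hU1]
        ring
      · push_neg at hlt
        have h3 : {ω | ∑ i, α i * (A i).indicator (fun _ => (1:ℝ)) ω > t}
            = {ω | ∑ i : Fin n, α i.succ * (A i.succ).indicator (fun _ => (1:ℝ)) ω > t} := by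
          ext ω
          simp only [Set.mem_setOf_eq]
          rw [Fin.sum_univ_succ]
          by_cases hω : ω ∈ A 0
          · have hsum : ∀ i : Fin n,
                α i.succ * (A i.succ).indicator (fun _ => (1:ℝ)) ω = 0 := by
              intro i
              have : ω ∉ A i.succ := fun h =>
                (hdisj i.succ 0 (Fin.succ_ne_zero i)).le_bot ⟨h, hω⟩
              simp [Set.indicator_of_notMem this]
            rw [Set.indicator_of_mem hω, Finset.sum_eq_zero (fun i _ => hsum i)]
            simp only [mul_one, add_zero]
            constructor
            · intro h; exact absurd h (not_lt.mpr hlt)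
            · intro h; exact absurd h (not_lt.mpr ht.le)
          · rw [Set.indicator_of_notMem hω]
            simp
        have h4 : t ∉ Set.Ioo (0:ℝ) (α 0) := by
          simp only [Set.mem_Ioo, not_and, not_lt]
          intro _; exact hlt
        rw [Set.indicator_of_notMem h4, h3, zero_add]
    -- integrability of the indicator piece
    have hIndInt : IntegrableOn
        (fun t => (Set.Ioo (0:ℝ) (α 0)).indicator (fun _ => c0 - c1) t)
        (Set.Ioi (0:ℝ)) := by
      rw [IntegrableOn, integrable_indicator_iff measurableSet_Ioo]
      apply (integrableOn_const_iff).mpr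
      right
      calc (volume.restrict (Set.Ioi (0:ℝ))) (Set.Ioo 0 (α 0))
          ≤ volume (Set.Ioo (0:ℝ) (α 0)) := Measure.restrict_apply_le _ _
        _ < ⊤ := by rw [Real.volume_Ioo]; exact ENNReal.ofReal_lt_top
    have hgInt : IntegrableOn
        (fun t => μ {ω | ∑ i, α i * (A i).indicator (fun _ => (1:ℝ)) ω > t})
        (Set.Ioi (0:ℝ)) := by
      have hsumInt : IntegrableOn
          (fun t => (Set.Ioo (0:ℝ) (α 0)).indicator (fun _ => c0 - c1) t
            + μ {ω | ∑ i : Fin n,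
                α i.succ * (A i.succ).indicator (fun _ => (1:ℝ)) ω > t})
          (Set.Ioi (0:ℝ)) := hIndInt.add ihInt
      exact IntegrableOn.congr_fun hsumInt key.symm measurableSet_Ioi
    refine ⟨hgInt, ?_⟩
    rw [setIntegral_congr_fun measurableSet_Ioi key,
      integral_add hIndInt ihInt]
    have hIndVal : (∫ t in Set.Ioi (0:ℝ),
        (Set.Ioo (0:ℝ) (α 0)).indicator (fun _ => c0 - c1) t) = α 0 * (c0 - c1) := by
      rw [setIntegral_indicator measurableSet_Ioo,
        Set.inter_eq_self_of_subset_right Set.Ioo_subset_Ioi_self,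
        setIntegral_const, Real.volume_real_Ioo_of_le (by linarith [h0 0]),
        smul_eq_mul]
      ring
    rw [hIndVal, ihEq, Fin.sum_univ_succ]
    congr 1
    apply Finset.sum_congr rfl
    intro i _
    have hIci : (⋃ j ∈ Finset.Ici i, A j.succ) = ⋃ j ∈ Finset.Ici i.succ, A j := by
      ext ω
      simp only [Set.mem_iUnion, Finset.mem_Ici]
      constructor
      · rintro ⟨j, hj, hω⟩
        exact ⟨j.succ, Fin.succ_le_succ_iff.mpr hj, hω⟩
      · rintro ⟨j, hj, hω⟩
        have hj0 : j ≠ 0 := by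
          intro h
          rw [h] at hj
          exact absurd hj (by simp [Fin.le_def])
        obtain ⟨k, rfl⟩ := Fin.eq_succ_of_ne_zero hj0
        exact ⟨k, Fin.succ_le_succ_iff.mp hj, hω⟩
    have hIoi : (⋃ j ∈ Finset.Ioi i, A j.succ) = ⋃ j ∈ Finset.Ioi i.succ, A j := by
      ext ω
      simp only [Set.mem_iUnion, Finset.mem_Ioi]
      constructor
      · rintro ⟨j, hj, hω⟩
        exact ⟨j.succ, Fin.succ_lt_succ_iff.mpr hj, hω⟩
      · rintro ⟨j, hj, hω⟩
        rcases Fin.eq_succ_of_ne_zero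
          (Fin.pos_iff_ne_zero.mp (lt_of_le_of_lt (Fin.zero_le _) hj)) with ⟨k, rfl⟩
        exact ⟨k, Fin.succ_lt_succ_iff.mp hj, hω⟩
    rw [hIci, hIoi]

/-- The quantum integral of a simple function `Σᵢ αᵢ χ_{Aᵢ}` with mutually disjoint
`Aᵢ` and `0 ≤ α₁ ≤ ⋯ ≤ αₙ` equals
`Σᵢ αᵢ·[μ(⋃_{j≥i} Aⱼ) − μ(⋃_{j>i} Aⱼ)]`. -/
theorem stmt_16 {Ω : Type*} [MeasurableSpace Ω] (μ : Set Ω → ℝ)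
    (hnonneg : ∀ A, MeasurableSet A → 0 ≤ μ A)
    (hempty : μ ∅ = 0)
    (n : ℕ) (A : Fin n → Set Ω) (hA : ∀ i, MeasurableSet (A i))
    (hdisj : ∀ i j, i ≠ j → Disjoint (A i) (A j))
    (α : Fin n → ℝ) (h0 : ∀ i, 0 ≤ α i) (hmono : Monotone α) :
    (∫ t in Set.Ioi (0 : ℝ),
        μ {ω | ∑ i, α i * (A i).indicator (fun _ => (1 : ℝ)) ω > t}) =
      ∑ i, α i * (μ (⋃ j ∈ Finset.Ici i, A j) - μ (⋃ j ∈ Finset.Ioi i, A j)) := by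
  exact (qaux μ hempty n A hdisj α h0 hmono).2
end

section
/- Let F: L₁(Ω,μ) → ℝ be a functional on a q-measure space satisfying: (i) for 0 ≤ α ≤ β, γ ≥ 0 and disjoint A,B, F(αχ_A + (β+γ)χ_B) = αμ(A) + (β+γ)μ(B) + u(α,β)·I(A,B) for some function u; and additionally F(αχ_{A∪B}) = αμ(A∪B). Then if there exist disjoint A,B with I(A,B) ≠ 0, necessarily u(α,β) = α for all 0 ≤ α ≤ β, i.e., F(αχ_A + βχ_B) = αμ(A) + βμ(B) + α·I(A,B) for all disjoint A,B and 0 ≤ α ≤ β. -/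
/-- Uniqueness step for the quantum integral: if `F` satisfies condition (i) with
weight function `u` and `F(αχ_{A∪B}) = α μ(A∪B)`, and some disjoint pair has
nonzero interference, then `u(α,β) = α` for all `0 ≤ α ≤ β`, i.e.
`F(αχ_A + βχ_B) = αμ(A) + βμ(B) + α·I(A,B)`. -/
theorem stmt_19 {Ω : Type*} [MeasurableSpace Ω] (μ : Set Ω → ℝ)
    (hnonneg : ∀ A, MeasurableSet A → 0 ≤ μ A)
    (hempty : μ ∅ = 0)
    (hgrade2 : ∀ A B C : Set Ω, MeasurableSet A → MeasurableSet B → MeasurableSet C →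
      Disjoint A B → Disjoint A C → Disjoint B C →
      μ (A ∪ B ∪ C) = μ (A ∪ B) + μ (A ∪ C) + μ (B ∪ C) - μ A - μ B - μ C)
    (hcontMono : ∀ A : ℕ → Set Ω, (∀ n, MeasurableSet (A n)) → Monotone A →
      Filter.Tendsto (fun n => μ (A n)) Filter.atTop (nhds (μ (⋃ n, A n))))
    (hcontAnti : ∀ A : ℕ → Set Ω, (∀ n, MeasurableSet (A n)) → Antitone A →
      Filter.Tendsto (fun n => μ (A n)) Filter.atTop (nhds (μ (⋂ n, A n))))
    (F : (Ω → ℝ) → ℝ) (u : ℝ → ℝ → ℝ)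
    (hi : ∀ (α β γ : ℝ), 0 ≤ α → α ≤ β → 0 ≤ γ →
      ∀ A B : Set Ω, MeasurableSet A → MeasurableSet B → Disjoint A B →
      F (fun ω => α * A.indicator (fun _ => (1 : ℝ)) ω
          + (β + γ) * B.indicator (fun _ => (1 : ℝ)) ω) =
        α * μ A + (β + γ) * μ B + u α β * (μ (A ∪ B) - μ A - μ B))
    (hind : ∀ (α : ℝ), 0 ≤ α → ∀ A B : Set Ω, MeasurableSet A → MeasurableSet B →
      Disjoint A B →
      F (fun ω => α * (A ∪ B).indicator (fun _ => (1 : ℝ)) ω) = α * μ (A ∪ B))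
    (hex : ∃ A B : Set Ω, MeasurableSet A ∧ MeasurableSet B ∧ Disjoint A B ∧
      μ (A ∪ B) - μ A - μ B ≠ 0) :
    (∀ α β : ℝ, 0 ≤ α → α ≤ β → u α β = α) ∧
      ∀ A B : Set Ω, MeasurableSet A → MeasurableSet B → Disjoint A B →
        ∀ α β : ℝ, 0 ≤ α → α ≤ β →
          F (fun ω => α * A.indicator (fun _ => (1 : ℝ)) ω
              + β * B.indicator (fun _ => (1 : ℝ)) ω) =
            α * μ A + β * μ B + α * (μ (A ∪ B) - μ A - μ B) := by

  obtain ⟨A₀, B₀, hA₀, hB₀, hd₀, hI₀⟩ := hex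
  -- key: u α β = α for 0 ≤ α ≤ β
  have key : ∀ α β : ℝ, 0 ≤ α → α ≤ β → u α β = α := by
    intro α β hα hαβ
    -- pointwise identity: α χ_A + α χ_B = α χ_{A∪B}
    have hfun : ∀ (A B : Set Ω), Disjoint A B →
        (fun ω => α * A.indicator (fun _ => (1 : ℝ)) ω
          + (α + 0) * B.indicator (fun _ => (1 : ℝ)) ω)
        = (fun ω => α * (A ∪ B).indicator (fun _ => (1 : ℝ)) ω) := by
      intro A B hd
      funext ω
      by_cases hA : ω ∈ A
      · have hB : ω ∉ B := fun hB => (Set.disjoint_left.mp hd hA) hB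
        simp [Set.indicator_of_mem, Set.indicator_of_notMem, hA, hB]
      · by_cases hB : ω ∈ B
        · simp [Set.indicator_of_mem, Set.indicator_of_notMem, hA, hB]
        · have : ω ∉ A ∪ B := by simp [hA, hB]
          simp [Set.indicator_of_notMem, hA, hB, this]
    -- u α α = α using A₀ B₀
    have h1 := hi α α 0 hα le_rfl le_rfl A₀ B₀ hA₀ hB₀ hd₀
    rw [hfun A₀ B₀ hd₀, hind α hα A₀ B₀ hA₀ hB₀ hd₀] at h1
    have huαα : u α α = α := by
      have hsum : α * μ (A₀ ∪ B₀) = α * μ A₀ + α * μ B₀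
          + α * (μ (A₀ ∪ B₀) - μ A₀ - μ B₀) := by ring
      have := h1.symm.trans hsum
      have h2 : u α α * (μ (A₀ ∪ B₀) - μ A₀ - μ B₀)
          = α * (μ (A₀ ∪ B₀) - μ A₀ - μ B₀) := by linarith
      exact mul_right_cancel₀ hI₀ h2
    -- now compare hi α β 0 and hi α α (β - α)
    have h3 := hi α β 0 hα hαβ le_rfl A₀ B₀ hA₀ hB₀ hd₀
    have h4 := hi α α (β - α) hα le_rfl (by linarith) A₀ B₀ hA₀ hB₀ hd₀
    rw [show α + (β - α) = β + 0 by ring] at h4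
    rw [h3] at h4
    have h5 : u α β * (μ (A₀ ∪ B₀) - μ A₀ - μ B₀)
        = u α α * (μ (A₀ ∪ B₀) - μ A₀ - μ B₀) := by linarith
    rw [huαα] at h5
    exact mul_right_cancel₀ hI₀ h5
  refine ⟨key, ?_⟩
  intro A B hA hB hd α β hα hαβ
  have h := hi α β 0 hα hαβ le_rfl A B hA hB hd
  rw [key α β hα hαβ] at h
  simpa using h
end
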